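/- Let G be a plane graph with at least one edge and let M_G be its medial graph. Let x and y be two vertices of G and let f_x and f_y be the faces of M_G corresponding to x and y respectively. Then the wall-by-wall distance between x and y in G equals one more than the minimum distance in M_G between a vertex on the boundary of f_x and a vertex on the boundary of f_y. -/

import Mathlib

/-!
Definitions for wall-by-wall distance, λ-flat graphs and ξ-nearly planar graphs,
following Grigoriev, Koutsonas and Thilikos, "Nearly Planar Graphs and λ-flat Graphs".

A plane graph is modelled combinatorially as a simple graph equipped with a rotation
system (a cyclic order of the edges incident to each vertex) that is planar, i.e.
satisfies Euler's formula (with faces counted as orbits of the face-tracing successor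
on darts, corrected for isolated vertices and the number of connected components).

A graph embedding in the sphere (where edges may cross, but only at points that are
not vertices) is modelled topologically by a `Drawing`: an injective placement of the
vertices on the unit sphere of `ℝ³` together with, for each edge, a simple arc joining
the images of its endpoints whose interior avoids all vertices.
-/

namespace WBW

/-- The set of edges of `G` incident to the vertex `v`. -/
def incidentSet {V : Type*} (G : SimpleGraph V) (v : V) : Set (Sym2 V) :=
  {e | e ∈ G.edgeSet ∧ v ∈ e}

/-- A simple graph together with a rotation system: for every vertex `v`, a
permutation of `Sym2 V` which fixes every non-incident edge and is a single cycle on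
the set of edges incident to `v` (the cyclic order `σ_v` of the drawing). -/
structure RotationSystem (V : Type*) where
  G : SimpleGraph V
  rot : V → Equiv.Perm (Sym2 V)
  rot_cycleOn : ∀ v, (rot v).IsCycleOn (incidentSet G v)
  rot_fixed : ∀ v, ∀ e ∉ incidentSet G v, rot v e = e

variable {V : Type*}

/-- The face-tracing successor on darts: the dart `(u,v)` is followed by the dart
leaving `v` along the edge succeeding `s(u,v)` in the cyclic order around `v`. -/
noncomputable def RotationSystem.faceNext (R : RotationSystem V) (d : R.G.Dart) :
    R.G.Dart :=
  have hmem : d.edge ∈ incidentSet R.G d.toProd.2 :=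
    ⟨d.edge_mem, by rcases d with ⟨⟨a, b⟩, h⟩; simp [SimpleGraph.Dart.edge]⟩
  have hmem' : R.rot d.toProd.2 d.edge ∈ incidentSet R.G d.toProd.2 :=
    (R.rot_cycleOn d.toProd.2).1.mapsTo hmem
  ⟨(d.toProd.2, Sym2.Mem.other hmem'.2), by
    have h := Sym2.other_spec hmem'.2
    have h2 : R.rot d.toProd.2 d.edge ∈ R.G.edgeSet := hmem'.1
    rw [← h] at h2
    exact h2⟩

/-- The number of faces of a rotation system: the number of orbits of the
face-tracing successor on darts. -/
noncomputable def RotationSystem.numFaces (R : RotationSystem V) : ℕ :=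
  Nat.card (Quot (fun a b : R.G.Dart => R.faceNext a = b))

/-- A rotation system is plane (it is an embedding of the graph in the sphere without
crossings) iff it satisfies Euler's formula, componentwise; isolated vertices are
accounted for separately, since they carry no dart. -/
def RotationSystem.IsPlane (R : RotationSystem V) : Prop :=
  Nat.card V + R.numFaces + Nat.card {v : V | ∀ w, ¬ R.G.Adj v w} =
    Nat.card R.G.edgeSet + 2 * Nat.card R.G.ConnectedComponent

/-- Two edges are attached if they share a vertex `v` and appear consecutively in the
cyclic order `σ_v` or its inverse. -/
def Attached (R : RotationSystem V) (e e' : Sym2 V) : Prop :=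
  ∃ v : V, e ∈ incidentSet R.G v ∧ e' ∈ incidentSet R.G v ∧
    (R.rot v e = e' ∨ R.rot v e' = e)

/-- A wall-by-wall walk: a nonempty sequence of distinct edges of `R.G` in which
every two consecutive edges are attached. -/
def IsWbwWalk (R : RotationSystem V) (L : List (Sym2 V)) : Prop :=
  L ≠ [] ∧ L.Nodup ∧ (∀ e ∈ L, e ∈ R.G.edgeSet) ∧ L.Chain' (Attached R)

/-- An `(x,y)`-wall-by-wall walk: a wall-by-wall walk whose first edge is incident to
`x` and whose last edge is incident to `y`. -/
def IsWbwWalkFromTo (R : RotationSystem V) (x y : V) (L : List (Sym2 V)) : Prop :=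
  IsWbwWalk R L ∧ (∃ e, L.head? = some e ∧ x ∈ e) ∧ (∃ e, L.getLast? = some e ∧ y ∈ e)

/-- The wall-by-wall distance between `x` and `y`: the least number of edges of an
`(x,y)`-wall-by-wall walk (`⊤` if there is no such walk). -/
noncomputable def wbwDist (R : RotationSystem V) (x y : V) : ℕ∞ :=
  sInf {n : ℕ∞ | ∃ L, IsWbwWalkFromTo R x y L ∧ (L.length : ℕ∞) = n}

/-- The `λ`-power of a plane graph: keep all edges and make adjacent all pairs of
vertices at wall-by-wall distance at most `λ`. -/
def RotationSystem.power (R : RotationSystem V) (l : ℕ) : SimpleGraph V :=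
  R.G ⊔ SimpleGraph.fromRel (fun x y => wbwDist R x y ≤ (l : ℕ∞))

/-- `H` is a subgraph of `G` via the injection `τ`. -/
def SubgraphVia {U V : Type*} (H : SimpleGraph U) (G : SimpleGraph V) (τ : U → V) :
    Prop :=
  Function.Injective τ ∧ ∀ x y, H.Adj x y → G.Adj (τ x) (τ y)

/-- A graph is `λ`-flat if it is a subgraph of the `λ`-power of some plane graph. -/
def IsFlat (l : ℕ) {V : Type*} (G : SimpleGraph V) : Prop :=
  ∃ (W : Type) (_ : Finite W) (R : RotationSystem W) (τ : V → W),
    R.IsPlane ∧ SubgraphVia G (R.power l) τ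

/-- The unit sphere in `ℝ³`. -/
def unitSphere : Set (EuclideanSpace ℝ (Fin 3)) := Metric.sphere 0 1

/-- A drawing (embedding) of a graph in the sphere: vertices are placed injectively,
every edge is drawn as a simple arc joining the images of its two endpoints, and the
interior of every arc avoids all vertex images (so edges may meet, away from their
endpoints, only at points that are not vertices). -/
structure Drawing {V : Type*} (G : SimpleGraph V) where
  vmap : V → unitSphere
  vmap_inj : Function.Injective vmap
  arc : Sym2 V → C(Set.Icc (0 : ℝ) 1, unitSphere)
  arc_inj : ∀ e ∈ G.edgeSet, Function.Injective (arc e)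
  arc_ends : ∀ e ∈ G.edgeSet,
    Sym2.map vmap e =
      s(arc e ⟨0, Set.mem_Icc.mpr (by norm_num)⟩, arc e ⟨1, Set.mem_Icc.mpr (by norm_num)⟩)
  interior_avoids : ∀ e ∈ G.edgeSet, ∀ t : Set.Icc (0 : ℝ) 1,
    (t : ℝ) ≠ 0 → (t : ℝ) ≠ 1 → arc e t ∉ Set.range vmap

/-- The crossings of the edge `e` in a drawing: pairs consisting of another edge `e'`
and a point, not a vertex, lying on the arcs of both `e` and `e'`. -/
def crossingSet {V : Type*} {G : SimpleGraph V} (D : Drawing G) (e : Sym2 V) :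
    Set (Sym2 V × unitSphere) :=
  {q | q.1 ∈ G.edgeSet ∧ q.1 ≠ e ∧ q.2 ∈ Set.range (D.arc e) ∧
    q.2 ∈ Set.range (D.arc q.1) ∧ q.2 ∉ Set.range D.vmap}

/-- A graph is `ξ`-nearly planar if it has a drawing in the sphere in which every
edge is crossed at most `ξ` times. -/
def IsNearlyPlanar (x : ℕ) {V : Type*} (G : SimpleGraph V) : Prop :=
  ∃ D : Drawing G, ∀ e ∈ G.edgeSet,
    (crossingSet D e).Finite ∧ (crossingSet D e).ncard ≤ x

/-- `λ(G)`: the least `λ` for which `G` is `λ`-flat. -/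
noncomputable def flatNum {V : Type*} (G : SimpleGraph V) : ℕ :=
  sInf {l | IsFlat l G}

/-- `ξ(G)`: the least `ξ` for which `G` is `ξ`-nearly planar. -/
noncomputable def nearNum {V : Type*} (G : SimpleGraph V) : ℕ :=
  sInf {x | IsNearlyPlanar x G}

/-- A graph is 3-connected if it has more than 3 vertices and removing any at most 2
vertices leaves it connected. -/
def ThreeConnected {V : Type*} (G : SimpleGraph V) : Prop :=
  3 < Nat.card V ∧ ∀ s : Set V, s.ncard ≤ 2 → (G.induce sᶜ).Connected

/-- A plane graph is triangulated if every face is bounded by a triangle, i.e. every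
orbit of the face-tracing successor has length exactly 3. -/
def RotationSystem.Triangulated (R : RotationSystem V) : Prop :=
  ∀ d : R.G.Dart, R.faceNext (R.faceNext (R.faceNext d)) = d ∧ R.faceNext d ≠ d

/-- `H` is a topological minor of `G`: some subdivision of `H` is a subgraph of `G`,
equivalently the branch vertices embed injectively into `G` and the edges of `H` are
realized by internally disjoint paths of `G` avoiding the branch vertices. -/
def IsTopMinor {U V : Type*} (H : SimpleGraph U) (G : SimpleGraph V) : Prop :=
  ∃ τ : U → V, Function.Injective τ ∧
    ∃ P : ∀ ⦃x y : U⦄, H.Adj x y → G.Walk (τ x) (τ y),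
      (∀ ⦃x y : U⦄ (h : H.Adj x y), (P h).IsPath) ∧
      (∀ ⦃x y : U⦄ (h : H.Adj x y), ∀ v ∈ (P h).support,
        v ∈ Set.range τ → v = τ x ∨ v = τ y) ∧
      (∀ ⦃x y x' y' : U⦄ (h : H.Adj x y) (h' : H.Adj x' y'), s(x, y) ≠ s(x', y') →
        ∀ v, v ∈ (P h).support → v ∈ (P h').support → v ∈ Set.range τ)

/-- `H` is a contraction of `G`: `H` is obtained from `G` by contracting edges,
equivalently there is a surjection `V(G) → V(H)` with connected fibres such that the
edges of `H` are exactly the pairs of distinct fibres joined by an edge of `G`. -/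
def IsContractionOf {U V : Type*} (H : SimpleGraph U) (G : SimpleGraph V) : Prop :=
  ∃ f : V → U, Function.Surjective f ∧
    (∀ u : U, (G.induce (f ⁻¹' {u})).Connected) ∧
    (∀ a b : U, H.Adj a b ↔ a ≠ b ∧ ∃ x y, G.Adj x y ∧ f x = a ∧ f y = b)

/-- The medial graph of a plane graph `G`: its vertices are the edges of `G`, two of
them being adjacent iff they are attached (this is the dual of the radial graph). -/
def medial (R : RotationSystem V) : SimpleGraph {e : Sym2 V // e ∈ R.G.edgeSet} :=
  SimpleGraph.fromRel (fun e f => Attached R e.1 f.1)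

/-- The `(n × n)`-grid graph. -/
def gridGraph (n : ℕ) : SimpleGraph (Fin n × Fin n) :=
  SimpleGraph.fromRel (fun a b =>
    (a.1 = b.1 ∧ (a.2 : ℕ) + 1 = (b.2 : ℕ)) ∨ (a.2 = b.2 ∧ (a.1 : ℕ) + 1 = (b.1 : ℕ)))

/-- The faces of a rotation system: orbits of the face-tracing successor on darts. -/
def RotationSystem.Face (R : RotationSystem V) : Type _ :=
  Quot (fun a b : R.G.Dart => R.faceNext a = b)

/-- The edge `e` lies on the boundary of the face `F`. -/
def EdgeOnFace (R : RotationSystem V) (e : Sym2 V) (F : R.Face) : Prop :=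
  ∃ d : R.G.Dart, Quot.mk _ d = F ∧ d.edge = e

/-- A wall-by-wall walk passes through the face `F` if two consecutive edges of the
walk both lie on the boundary of `F`. -/
def WalkThroughFace (R : RotationSystem V) (L : List (Sym2 V)) (F : R.Face) : Prop :=
  ∃ (l₁ : List (Sym2 V)) (e₁ e₂ : Sym2 V) (l₂ : List (Sym2 V)),
    L = l₁ ++ e₁ :: e₂ :: l₂ ∧ EdgeOnFace R e₁ F ∧ EdgeOnFace R e₂ F

end WBW


namespace WBWAux
open WBW

lemma enat_sInf_mem {S : Set ℕ∞} (h : S.Nonempty) : sInf S ∈ S := by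
  rcases eq_or_ne (sInf S) ⊤ with ht | ht
  · obtain ⟨a, ha⟩ := h
    have : a = ⊤ := top_le_iff.mp (ht ▸ sInf_le ha)
    rw [ht, ← this]; exact ha
  · have hlt : sInf S < sInf S + 1 := (ENat.lt_add_one_iff ht).mpr le_rfl
    obtain ⟨b, hb, hlt'⟩ := sInf_lt_iff.mp hlt
    have h1 : b ≤ sInf S := (ENat.lt_add_one_iff ht).mp hlt'
    have h2 : sInf S ≤ b := sInf_le hb
    rwa [le_antisymm h2 h1]

variable {V : Type*}

lemma attached_symm {R : RotationSystem V} {e f : Sym2 V} (h : Attached R e f) :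
    Attached R f e := by
  obtain ⟨v, h1, h2, h3⟩ := h
  exact ⟨v, h2, h1, h3.symm⟩

lemma adj_attached {R : RotationSystem V} {e f : {e : Sym2 V // e ∈ R.G.edgeSet}}
    (h : (medial R).Adj e f) : Attached R e.1 f.1 := by
  rw [medial, SimpleGraph.fromRel_adj] at h
  rcases h.2 with h' | h'
  · exact h'
  · exact attached_symm h'

lemma chain_edist (R : RotationSystem V) :
    ∀ (L : List (Sym2 V)), L.Nodup → (∀ e ∈ L, e ∈ R.G.edgeSet) →
      L.Chain' (Attached R) → ∀ (e f : {e : Sym2 V // e ∈ R.G.edgeSet}),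
      L.head? = some e.1 → L.getLast? = some f.1 →
      (medial R).edist e f + 1 ≤ (L.length : ℕ∞)
  | [], _, _, _, e, f, hh, _ => by simp at hh
  | [a], _, _, _, e, f, hh, hl => by
    simp only [List.head?_cons, Option.some.injEq] at hh
    simp only [List.getLast?_singleton, Option.some.injEq] at hl
    have : e = f := Subtype.ext (hh.symm.trans hl)
    subst this
    simp [SimpleGraph.edist_self]
  | a :: b :: t, hnd, hmem, hch, e, f, hh, hl => by
    simp only [List.head?_cons, Option.some.injEq] at hh
    have hab : a ≠ b := by
      intro h
      exact (List.nodup_cons.mp hnd).1 (h ▸ List.mem_cons_self)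
    have hatt : Attached R a b := (List.isChain_cons_cons.mp hch).1
    have hb : b ∈ R.G.edgeSet := hmem b (by simp)
    set e' : {e : Sym2 V // e ∈ R.G.edgeSet} := ⟨b, hb⟩ with he'
    have hadj : (medial R).Adj e e' := by
      rw [medial, SimpleGraph.fromRel_adj]
      refine ⟨?_, Or.inl (hh ▸ hatt)⟩
      intro h
      exact hab (hh ▸ congrArg Subtype.val h)
    have ih := chain_edist R (b :: t) (List.nodup_cons.mp hnd).2
      (fun x hx => hmem x (List.mem_cons_of_mem _ hx))
      (List.isChain_cons_cons.mp hch).2 e' f rfl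
      (by rwa [List.getLast?_cons_cons] at hl)
    have h1 : (medial R).edist e f ≤ 1 + (medial R).edist e' f := by
      calc (medial R).edist e f ≤ (medial R).edist e e' + (medial R).edist e' f :=
            SimpleGraph.edist_triangle
        _ ≤ 1 + (medial R).edist e' f := by
            gcongr
            exact (SimpleGraph.edist_eq_one_iff_adj.mpr hadj).le
    calc (medial R).edist e f + 1 ≤ (1 + (medial R).edist e' f) + 1 := by gcongr
      _ = 1 + ((medial R).edist e' f + 1) := by ring
      _ ≤ 1 + ((b :: t).length : ℕ∞) := by gcongr
      _ = ((a :: b :: t).length : ℕ∞) := by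
          simp [List.length_cons]; ring

lemma path_to_wbw (R : RotationSystem V) {x y : V}
    {e f : {e : Sym2 V // e ∈ R.G.edgeSet}} (hx : x ∈ e.1) (hy : y ∈ f.1)
    (p : (medial R).Walk e f) (hp : p.IsPath) :
    IsWbwWalkFromTo R x y (p.support.map Subtype.val) ∧
      (p.support.map Subtype.val).length = p.length + 1 := by
  constructor
  · refine ⟨⟨?_, ?_, ?_, ?_⟩, ?_, ?_⟩
    · exact fun h => p.support_ne_nil (List.map_eq_nil_iff.mp h)
    · exact hp.support_nodup.map Subtype.val_injective
    · intro g hg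
      obtain ⟨a, _, rfl⟩ := List.mem_map.mp hg
      exact a.2
    · exact List.isChain_map_of_isChain _ (fun a b h => adj_attached h) p.isChain_adj_support
    · refine ⟨e.1, ?_, hx⟩
      rw [List.head?_map, List.head?_eq_head p.support_ne_nil, p.head_support]
      rfl
    · refine ⟨f.1, ?_, hy⟩
      rw [List.getLast?_map, List.getLast?_eq_getLast_of_ne_nil p.support_ne_nil]
      simp [p.getLast_support]
  · simp [p.length_support]

end WBWAux

/-- Observation 1: in a plane graph `G` with at least one edge, the
wall-by-wall distance between vertices `x` and `y` is one more than the minimum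
distance in the medial graph `M_G` between a vertex on the boundary of the face
`f_x` corresponding to `x` (i.e. an edge of `G` incident to `x`) and a vertex on
the boundary of the face `f_y` corresponding to `y`. -/
theorem observation_medial (V : Type) [Finite V] (R : WBW.RotationSystem V)
    (hplane : R.IsPlane) (hne : R.G.edgeSet.Nonempty) (x y : V) :
    WBW.wbwDist R x y =
      1 + sInf {d : ℕ∞ | ∃ e f : {e : Sym2 V // e ∈ R.G.edgeSet},
        x ∈ e.1 ∧ y ∈ f.1 ∧ (WBW.medial R).edist e f = d} := by
  classical
  rw [WBW.wbwDist]
  set S1 := {n : ℕ∞ | ∃ L, WBW.IsWbwWalkFromTo R x y L ∧ (L.length : ℕ∞) = n} with hS1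
  set S2 := {d : ℕ∞ | ∃ e f : {e : Sym2 V // e ∈ R.G.edgeSet},
      x ∈ e.1 ∧ y ∈ f.1 ∧ (WBW.medial R).edist e f = d} with hS2
  apply le_antisymm
  · rcases S2.eq_empty_or_nonempty with h | h
    · rw [h, sInf_empty]
      exact le_top
    · obtain ⟨e, f, hx, hy, hd⟩ := WBWAux.enat_sInf_mem h
      rcases eq_or_ne (sInf S2) ⊤ with ht | ht
      · rw [ht]; exact le_top
      · obtain ⟨p, hp⟩ := SimpleGraph.exists_walk_of_edist_ne_top (hd ▸ ht)
        obtain ⟨hwbw, hlen⟩ := WBWAux.path_to_wbw R hx hy p.bypass p.bypass_isPath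
        calc sInf S1 ≤ ((p.bypass.support.map Subtype.val).length : ℕ∞) :=
              sInf_le ⟨_, hwbw, rfl⟩
          _ = (p.bypass.length : ℕ∞) + 1 := by rw [hlen]; push_cast; ring
          _ ≤ (p.length : ℕ∞) + 1 := by gcongr; exact_mod_cast p.length_bypass_le
          _ = (WBW.medial R).edist e f + 1 := by rw [hp]
          _ = 1 + sInf S2 := by rw [hd, add_comm]
  · rcases S1.eq_empty_or_nonempty with h | h
    · rw [h, sInf_empty]; exact le_top
    · obtain ⟨L, hwbw, hlen⟩ := WBWAux.enat_sInf_mem h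
      obtain ⟨⟨hne', hnd, hmem, hch⟩, ⟨e0, he0, hxe0⟩, ⟨el, hel, hyel⟩⟩ := hwbw
      have he0m : e0 ∈ R.G.edgeSet := hmem e0 (List.mem_of_mem_head? he0)
      have helm : el ∈ R.G.edgeSet := hmem el (List.mem_of_mem_getLast? hel)
      have key := WBWAux.chain_edist R L hnd hmem hch ⟨e0, he0m⟩ ⟨el, helm⟩ he0 hel
      have h2 : sInf S2 ≤ (WBW.medial R).edist ⟨e0, he0m⟩ ⟨el, helm⟩ :=
        sInf_le ⟨_, _, hxe0, hyel, rfl⟩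
      calc 1 + sInf S2 ≤ 1 + (WBW.medial R).edist ⟨e0, he0m⟩ ⟨el, helm⟩ := by gcongr
        _ = (WBW.medial R).edist ⟨e0, he0m⟩ ⟨el, helm⟩ + 1 := add_comm _ _
        _ ≤ (L.length : ℕ∞) := key
        _ = sInf S1 := hlen
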